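/- arXiv:1103.3404 — 5 statements merged into one kernel-verified Lean document; each statement's English description precedes it below -/
import Mathlib

section
/- Let A be a von Neumann algebra on a complex Hilbert space H, and (p_ξ)_{ξ∈Ξ} an orthogonal family of projections belonging to A whose supremum is 1 in B(H). Then A coincides with its infinite order decomposition: if a ∈ B(H) satisfies p_ξ a p_η ∈ A for all ξ, η ∈ Ξ, then a ∈ A. -/
open scoped InnerProductSpace

open Filter Topology

section Aux

variable {H : Type*} [NormedAddCommGroup H] [InnerProductSpace ℂ H] [CompleteSpace H]

/-- A selfadjoint idempotent operator is a contraction. -/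
lemma aux_contraction (q : H →L[ℂ] H) (hsa : IsSelfAdjoint q) (hid : q * q = q) (x : H) :
    ‖q x‖ ≤ ‖x‖ := by
  rcases eq_or_ne (q x) 0 with h | h
  · simp [h]
  · have h1 : ‖q x‖ ^ 2 = RCLike.re (⟪q x, q x⟫_ℂ) := (inner_self_eq_norm_sq _).symm
    have hadj : ContinuousLinearMap.adjoint q = q := hsa
    have h2 : ⟪q x, q x⟫_ℂ = ⟪x, q x⟫_ℂ := by
      rw [← ContinuousLinearMap.adjoint_inner_right q x (q x), hadj,
        ← ContinuousLinearMap.mul_apply, hid]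
    have h3 : ‖q x‖ ^ 2 ≤ ‖x‖ * ‖q x‖ := by
      rw [h1, h2]
      exact (RCLike.re_le_norm _).trans (norm_inner_le_norm x (q x))
    have hq : 0 < ‖q x‖ := norm_pos_iff.mpr h
    nlinarith

end Aux

/-- Let `A` be a von Neumann algebra on a complex Hilbert space `H`
(a unital *-subalgebra of `B(H)` closed in the weak operator topology) and `(p ξ)` an
orthogonal family of projections in `A` with supremum `1` in `B(H)`. Then `A` coincides with
its infinite order decomposition: any `a ∈ B(H)` with `p ξ * a * p η ∈ A` for all `ξ, η`
belongs to `A`. -/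
theorem stmt_7 {H : Type*} [NormedAddCommGroup H] [InnerProductSpace ℂ H] [CompleteSpace H]
    {Ξ : Type*} (A : StarSubalgebra ℂ (H →L[ℂ] H))
    (hA : IsClosed ((ContinuousLinearMapWOT.ofCLM : (H →L[ℂ] H) → (H →WOT[ℂ] H)) '' (A : Set (H →L[ℂ] H))))
    (p : Ξ → H →L[ℂ] H) (hpA : ∀ ξ, p ξ ∈ A)
    (hproj : ∀ ξ, IsSelfAdjoint (p ξ) ∧ p ξ * p ξ = p ξ)
    (horth : ∀ ξ η, ξ ≠ η → p ξ * p η = 0)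
    (hsup : (⨆ ξ, LinearMap.range (p ξ : H →ₗ[ℂ] H)).topologicalClosure = ⊤)
    (a : H →L[ℂ] H) (ha : ∀ ξ η, p ξ * a * p η ∈ A) :
    a ∈ A := by
  classical
  set q : Finset Ξ → (H →L[ℂ] H) := fun F => ∑ ξ ∈ F, p ξ with hq_def
  -- basic properties of q F
  have hq_sa : ∀ F, IsSelfAdjoint (q F) := by
    intro F
    rw [hq_def]
    simp only [IsSelfAdjoint, star_sum]
    exact Finset.sum_congr rfl fun ξ _ => (hproj ξ).1
  have hq_mul : ∀ F ξ, ξ ∈ F → q F * p ξ = p ξ := by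
    intro F ξ hξ
    rw [hq_def]
    simp only [Finset.sum_mul]
    rw [Finset.sum_eq_single ξ]
    · exact (hproj ξ).2
    · intro η _ hne; exact horth η ξ hne
    · intro h; exact absurd hξ h
  have hq_id : ∀ F, q F * q F = q F := by
    intro F
    nth_rewrite 2 [hq_def]
    simp only [Finset.mul_sum]
    calc ∑ ξ ∈ F, q F * p ξ = ∑ ξ ∈ F, p ξ :=
          Finset.sum_congr rfl fun ξ hξ => hq_mul F ξ hξ
      _ = q F := rfl
  have hq_norm : ∀ F x, ‖q F x‖ ≤ ‖x‖ := fun F => aux_contraction (q F) (hq_sa F) (hq_id F)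
  have hqA : ∀ F, q F ∈ A := fun F => sum_mem (fun ξ _ => hpA ξ)
  -- q F fixes the algebraic supremum eventually
  have hfix : ∀ z ∈ (⨆ ξ, LinearMap.range (p ξ : H →ₗ[ℂ] H)), ∃ F₀ : Finset Ξ,
      ∀ F, F₀ ⊆ F → q F z = z := by
    intro z hz
    refine Submodule.iSup_induction (motive := fun z => ∃ F₀ : Finset Ξ, ∀ F, F₀ ⊆ F → q F z = z)
      (fun ξ => LinearMap.range (p ξ : H →ₗ[ℂ] H)) hz ?_ ?_ ?_
    · rintro ξ z ⟨y, rfl⟩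
      refine ⟨{ξ}, fun F hF => ?_⟩
      have : q F * p ξ = p ξ := hq_mul F ξ (hF (Finset.mem_singleton_self ξ))
      calc q F (p ξ y) = (q F * p ξ) y := rfl
        _ = p ξ y := by rw [this]
    · exact ⟨∅, fun F _ => map_zero _⟩
    · rintro y z ⟨F₁, h₁⟩ ⟨F₂, h₂⟩
      exact ⟨F₁ ∪ F₂, fun F hF => by
        rw [map_add, h₁ F (Finset.union_subset_iff.mp hF).1,
          h₂ F (Finset.union_subset_iff.mp hF).2]⟩
  -- q F x → x for every x
  have htend : ∀ x : H, Tendsto (fun F => q F x) atTop (𝓝 x) := by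
    intro x
    rw [Metric.tendsto_atTop]
    intro ε hε
    have hx : x ∈ closure ((⨆ ξ, LinearMap.range (p ξ : H →ₗ[ℂ] H) : Submodule ℂ H) : Set H) := by
      rw [← Submodule.topologicalClosure_coe, hsup]
      trivial
    rw [Metric.mem_closure_iff] at hx
    obtain ⟨z, hz, hdz⟩ := hx (ε / 2) (by linarith)
    obtain ⟨F₀, hF₀⟩ := hfix z hz
    refine ⟨F₀, fun F hF => ?_⟩
    have h1 : ‖q F x - x‖ ≤ ‖q F (x - z)‖ + ‖q F z - z‖ + ‖z - x‖ := by
      have : q F x - x = q F (x - z) + (q F z - z) + (z - x) := by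
        rw [map_sub]; abel
      rw [this]
      calc ‖q F (x - z) + (q F z - z) + (z - x)‖
          ≤ ‖q F (x - z) + (q F z - z)‖ + ‖z - x‖ := norm_add_le _ _
        _ ≤ ‖q F (x - z)‖ + ‖q F z - z‖ + ‖z - x‖ :=
            add_le_add_left (norm_add_le _ _) _
    have h2 : ‖q F (x - z)‖ ≤ ‖x - z‖ := hq_norm F _
    have h3 : q F z = z := hF₀ F hF
    have h4 : ‖x - z‖ < ε / 2 := by rwa [← dist_eq_norm]
    have h5 : ‖z - x‖ < ε / 2 := by rwa [norm_sub_rev]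
    rw [dist_eq_norm]
    simp only [h3, sub_self, norm_zero] at h1
    linarith
  -- the truncated operators converge to `a` in WOT
  have hconv : Tendsto (fun F => (ContinuousLinearMapWOT.ofCLM : (H →L[ℂ] H) → (H →WOT[ℂ] H)) (q F * a * q F)) atTop
      (𝓝 ((ContinuousLinearMapWOT.ofCLM : (H →L[ℂ] H) → (H →WOT[ℂ] H)) a)) := by
    rw [ContinuousLinearMapWOT.tendsto_iff_forall_dual_apply_tendsto]
    intro x y
    have hnorm : Tendsto (fun F => (q F * a * q F) x) atTop (𝓝 (a x)) := by
      have key : ∀ F, ‖(q F * a * q F) x - a x‖ ≤ ‖a (q F x) - a x‖ + ‖q F (a x) - a x‖ := by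
        intro F
        have : (q F * a * q F) x - a x = q F (a (q F x) - a x) + (q F (a x) - a x) := by
          simp only [ContinuousLinearMap.mul_apply, map_sub]
          abel
        rw [this]
        exact (norm_add_le _ _).trans (add_le_add_left (hq_norm F _) _)
      have t1 : Tendsto (fun F => ‖a (q F x) - a x‖ + ‖q F (a x) - a x‖) atTop (𝓝 0) := by
        have ha1 : Tendsto (fun F => a (q F x)) atTop (𝓝 (a x)) :=
          (a.continuous.tendsto _).comp (htend x)
        rw [tendsto_iff_norm_sub_tendsto_zero] at ha1
        have e2 := (tendsto_iff_norm_sub_tendsto_zero).mp (htend (a x))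
        simpa using ha1.add e2
      rw [tendsto_iff_norm_sub_tendsto_zero]
      exact squeeze_zero (fun F => norm_nonneg _) key t1
    exact (y.continuous.tendsto _).comp hnorm
  -- conclude using WOT-closedness
  have hmem : ∀ F, (ContinuousLinearMapWOT.ofCLM : (H →L[ℂ] H) → (H →WOT[ℂ] H)) (q F * a * q F) ∈
      (ContinuousLinearMapWOT.ofCLM : (H →L[ℂ] H) → (H →WOT[ℂ] H)) '' (A : Set (H →L[ℂ] H)) := by
    intro F
    have hFA : q F * a * q F ∈ A := by
      have heq : q F * a * q F = ∑ ξ ∈ F, ∑ η ∈ F, p ξ * a * p η := by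
        rw [hq_def]
        simp only [Finset.sum_mul, Finset.mul_sum]
        exact Finset.sum_comm
      rw [heq]
      exact sum_mem fun ξ _ => sum_mem fun η _ => ha ξ η
    exact ⟨_, hFA, rfl⟩
  have : (ContinuousLinearMapWOT.ofCLM : (H →L[ℂ] H) → (H →WOT[ℂ] H)) a ∈
      (ContinuousLinearMapWOT.ofCLM : (H →L[ℂ] H) → (H →WOT[ℂ] H)) '' (A : Set (H →L[ℂ] H)) :=
    hA.mem_of_tendsto hconv (Eventually.of_forall hmem)
  obtain ⟨b, hb, hba⟩ := this
  rwa [← ContinuousLinearMapWOT.ofCLM_injective hba]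
end

section
/- Let A be a C*-subalgebra of B(H) containing the identity operator, and (p_ξ)_{ξ∈Ξ} an orthogonal family of projections belonging to A whose supremum is 1 in B(H). Suppose the projections p_ξ are pairwise equivalent in A and for every ξ the corner p_ξ A p_ξ is closed in the weak operator topology of B(H). Then for all ξ, η ∈ Ξ the corner p_ξ A p_η = {p_ξ a p_η : a ∈ A} is closed in the weak operator topology of B(H). -/
open scoped InnerProductSpace

/-- Right multiplication by a fixed operator is WOT-continuous. -/
lemma wot_mulRight_continuous {H : Type*} [NormedAddCommGroup H] [InnerProductSpace ℂ H]
    (v : H →L[ℂ] H) :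
    Continuous fun a : H →WOT[ℂ] H =>
      ((ContinuousLinearMapWOT.linearEquiv ℂ).symm : (H →L[ℂ] H) ≃ₗ[ℂ] (H →WOT[ℂ] H))
        (((ContinuousLinearMapWOT.linearEquiv ℂ).symm : (H →L[ℂ] H) ≃ₗ[ℂ] (H →WOT[ℂ] H)).symm a * v) := by
  apply ContinuousLinearMapWOT.continuous_of_dual_apply_continuous
  intro x y
  have h : ∀ a : H →WOT[ℂ] H,
      (((ContinuousLinearMapWOT.linearEquiv ℂ).symm : (H →L[ℂ] H) ≃ₗ[ℂ] (H →WOT[ℂ] H))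
        (((ContinuousLinearMapWOT.linearEquiv ℂ).symm : (H →L[ℂ] H) ≃ₗ[ℂ] (H →WOT[ℂ] H)).symm a * v)) x = a (v x) := fun a => rfl
  simp only [h]
  exact ContinuousLinearMapWOT.continuous_dual_apply (v x) y

/-- Let `A` be a (norm-closed) C*-subalgebra of `B(H)` containing the identity
and `(p ξ)` an orthogonal family of projections in `A` with supremum `1` in `B(H)`. If the
projections are pairwise (Murray–von Neumann) equivalent in `A` and every diagonal corner
`p ξ * A * p ξ` is closed in the weak operator topology, then every corner
`p ξ * A * p η = {p ξ * a * p η : a ∈ A}` is closed in the weak operator topology. -/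
theorem stmt_8 {H : Type*} [NormedAddCommGroup H] [InnerProductSpace ℂ H] [CompleteSpace H]
    {Ξ : Type*} (A : StarSubalgebra ℂ (H →L[ℂ] H)) (hA : IsClosed (A : Set (H →L[ℂ] H)))
    (p : Ξ → H →L[ℂ] H) (hpA : ∀ ξ, p ξ ∈ A)
    (hproj : ∀ ξ, IsSelfAdjoint (p ξ) ∧ p ξ * p ξ = p ξ)
    (horth : ∀ ξ η, ξ ≠ η → p ξ * p η = 0)
    (hsup : (⨆ ξ, LinearMap.range (p ξ : H →ₗ[ℂ] H)).topologicalClosure = ⊤)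
    (hequiv : ∀ ξ η, ∃ v ∈ A, v * star v = p ξ ∧ star v * v = p η)
    (hcorner : ∀ ξ, IsClosed ((ContinuousLinearMapWOT.ofCLM : (H →L[ℂ] H) → H →WOT[ℂ] H) ''
      {x : H →L[ℂ] H | ∃ a ∈ A, x = p ξ * a * p ξ})) :
    ∀ ξ η, IsClosed ((ContinuousLinearMapWOT.ofCLM : (H →L[ℂ] H) → H →WOT[ℂ] H) ''
      {x : H →L[ℂ] H | ∃ a ∈ A, x = p ξ * a * p η}) := by
  intro ξ η
  obtain ⟨v, hvA, hvv, hvv'⟩ := hequiv ξ η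
  set T := ((ContinuousLinearMapWOT.linearEquiv ℂ).symm : (H →L[ℂ] H) ≃ₗ[ℂ] (H →WOT[ℂ] H)) with hT
  -- key commutation relations
  have hpv : p ξ * v = v * p η := by
    rw [← hvv, ← hvv', mul_assoc]
  have hpv' : p η * star v = star v * p ξ := by
    rw [← hvv, ← hvv', mul_assoc]
  -- the two continuous maps
  set f : (H →WOT[ℂ] H) → (H →WOT[ℂ] H) := fun a => T (T.symm a * star v) with hf
  set g : (H →WOT[ℂ] H) → (H →WOT[ℂ] H) := fun a => T (T.symm a * (star v * v)) with hg
  have hfc : Continuous f := wot_mulRight_continuous (star v)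
  have hgc : Continuous g := wot_mulRight_continuous (star v * v)
  have key : T '' {x : H →L[ℂ] H | ∃ a ∈ A, x = p ξ * a * p η}
      = f ⁻¹' (T '' {x : H →L[ℂ] H | ∃ a ∈ A, x = p ξ * a * p ξ}) ∩ {a | g a = a} := by
    ext w
    constructor
    · rintro ⟨x, ⟨a, haA, rfl⟩, rfl⟩
      constructor
      · refine ⟨p ξ * a * p η * star v, ⟨a * star v, mul_mem haA (star_mem hvA), ?_⟩, ?_⟩
        · rw [mul_assoc (p ξ * a), hpv', ← hvv]
          simp only [mul_assoc]
        · simp only [hf, LinearEquiv.symm_apply_apply]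
      · simp only [hg, Set.mem_setOf_eq, LinearEquiv.symm_apply_apply]
        congr 1
        rw [hvv']
        rw [mul_assoc, (hproj η).2]
    · rintro ⟨⟨y, ⟨c, hcA, rfl⟩, hfw⟩, hgw⟩
      have hsymm : T.symm w * star v = p ξ * c * p ξ := by
        have := congrArg T.symm hfw
        simpa only [hf, LinearEquiv.symm_apply_apply] using this.symm
      refine ⟨T.symm w, ⟨c * v, mul_mem hcA hvA, ?_⟩, by simp⟩
      have : T.symm w * (star v * v) = p ξ * c * p ξ * v := by
        rw [← mul_assoc, hsymm]
      have hw : T.symm w = p ξ * c * p ξ * v := by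
        have h2 := congrArg T.symm hgw
        simp only [hg, LinearEquiv.symm_apply_apply] at h2
        rw [← h2, this]
      rw [hw, mul_assoc (p ξ * c), hpv]
      simp only [mul_assoc]
  show IsClosed (T '' _)
  rw [key]
  exact ((hcorner ξ).preimage hfc).inter (isClosed_eq hgc continuous_id)
end

section
/- Let A be a C*-subalgebra of B(H) containing the identity operator, and (p_ξ)_{ξ∈Ξ} an orthogonal family of projections belonging to A whose supremum is 1 in B(H). Suppose the projections p_ξ are pairwise equivalent in A and for every ξ the corner p_ξ A p_ξ is closed in the weak operator topology of B(H). Then the infinite order decomposition S = {a ∈ B(H) : p_ξ a p_η ∈ A for all ξ, η ∈ Ξ} is closed under the multiplication of B(H), and hence S is a C*-subalgebra of B(H). -/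
open scoped InnerProductSpace

section aux
variable {H : Type*} [NormedAddCommGroup H] [InnerProductSpace ℂ H] [CompleteSpace H]
  {Ξ : Type*} (p : Ξ → H →L[ℂ] H)

lemma aux_hasSum
    (hproj : ∀ ξ, IsSelfAdjoint (p ξ) ∧ p ξ * p ξ = p ξ)
    (horth : ∀ ξ η, ξ ≠ η → p ξ * p η = 0)
    (hsup : (⨆ ξ, LinearMap.range (p ξ : H →ₗ[ℂ] H)).topologicalClosure = ⊤) (x : H) :
    HasSum (fun ζ => p ζ x) x := by
  classical
  set F : Ξ → Submodule ℂ H := fun ζ => LinearMap.range (p ζ : H →ₗ[ℂ] H) with hF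
  have hmem : ∀ ζ (y : H), y ∈ F ζ ↔ p ζ y = y := by
    intro ζ y
    constructor
    · rintro ⟨z, rfl⟩
      have := (hproj ζ).2
      calc p ζ (p ζ z) = (p ζ * p ζ) z := rfl
        _ = p ζ z := by rw [this]
    · intro h; exact ⟨y, h⟩
  have hcl : ∀ ζ, IsClosed (F ζ : Set H) := by
    intro ζ
    have : (F ζ : Set H) = {y | (p ζ - 1) y = 0} := by
      ext y
      simp [hmem ζ y, sub_eq_zero, ContinuousLinearMap.sub_apply]
    rw [this]
    exact isClosed_eq ((p ζ - 1).continuous) continuous_const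
  haveI : ∀ ζ, CompleteSpace (F ζ) := fun ζ => (hcl ζ).completeSpace_coe
  have hortho : OrthogonalFamily ℂ (fun ζ => F ζ) (fun ζ => (F ζ).subtypeₗᵢ) := by
    intro i j hij u w
    obtain ⟨a, ha⟩ := u.2
    obtain ⟨b, hb⟩ := w.2
    have hu : (u : H) = p i a := ha.symm
    have hw : (w : H) = p j b := hb.symm
    have hsa := ContinuousLinearMap.isSelfAdjoint_iff'.mp (hproj i).1
    show ⟪(u : H), (w : H)⟫_ℂ = 0
    rw [hu, hw]
    calc ⟪p i a, p j b⟫_ℂ = ⟪(ContinuousLinearMap.adjoint (p i)) a, p j b⟫_ℂ := by rw [hsa]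
      _ = ⟪a, p i (p j b)⟫_ℂ := ContinuousLinearMap.adjoint_inner_left _ _ _
      _ = ⟪a, (p i * p j) b⟫_ℂ := rfl
      _ = 0 := by rw [horth i j hij]; simp
  have hsum : IsHilbertSum ℂ (fun ζ => F ζ) (fun ζ => (F ζ).subtypeₗᵢ) :=
    IsHilbertSum.mkInternal _ hortho (by rw [hsup])
  set e := hsum.linearIsometryEquiv with he
  set w := e x with hw
  have h1 : HasSum (fun ζ => ((w ζ : H))) x := by
    have := hsum.hasSum_linearIsometryEquiv_symm w
    simpa [hw, he] using this
  have h2 : ∀ ζ, p ζ x = (w ζ : H) := by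
    intro ζ
    have h3 : HasSum (fun i => p ζ ((w i : H))) (p ζ x) := h1.mapL (p ζ)
    have h4 : (fun i => p ζ ((w i : H))) = fun i => if i = ζ then (w ζ : H) else 0 := by
      funext i
      by_cases hi : i = ζ
      · subst hi
        simp only [if_pos rfl]
        exact (hmem i (w i)).mp (w i).2
      · simp only [if_neg hi]
        obtain ⟨b, hb⟩ := (w i).2
        rw [← hb]
        calc p ζ (p i b) = (p ζ * p i) b := rfl
          _ = 0 := by rw [horth ζ i (Ne.symm hi)]; simp
    rw [h4] at h3
    exact h3.unique (hasSum_ite_eq ζ _)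
  simpa [funext h2] using h1

end aux

/-- Let `A` be a (norm-closed) C*-subalgebra of `B(H)` containing the identity
and `(p ξ)` an orthogonal family of projections in `A` with supremum `1` in `B(H)`, whose
members are pairwise equivalent in `A` and such that each corner `p ξ * A * p ξ` is closed in
the weak operator topology. Then the infinite order decomposition
`S = {a : p ξ * a * p η ∈ A for all ξ, η}` is closed under the multiplication of `B(H)`, and
hence `S` is a (norm-closed, star-closed, unital) C*-subalgebra of `B(H)`. -/
theorem stmt_9 {H : Type*} [NormedAddCommGroup H] [InnerProductSpace ℂ H] [CompleteSpace H]
    {Ξ : Type*} (A : StarSubalgebra ℂ (H →L[ℂ] H)) (hA : IsClosed (A : Set (H →L[ℂ] H)))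
    (p : Ξ → H →L[ℂ] H) (hpA : ∀ ξ, p ξ ∈ A)
    (hproj : ∀ ξ, IsSelfAdjoint (p ξ) ∧ p ξ * p ξ = p ξ)
    (horth : ∀ ξ η, ξ ≠ η → p ξ * p η = 0)
    (hsup : (⨆ ξ, LinearMap.range (p ξ : H →ₗ[ℂ] H)).topologicalClosure = ⊤)
    (hequiv : ∀ ξ η, ∃ v ∈ A, v * star v = p ξ ∧ star v * v = p η)
    (hcorner : ∀ ξ, IsClosed ((ContinuousLinearMapWOT.ofCLM :
        (H →L[ℂ] H) → ContinuousLinearMapWOT (RingHom.id ℂ) H H) ''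
      {x : H →L[ℂ] H | ∃ a ∈ A, x = p ξ * a * p ξ}))
    (S : Set (H →L[ℂ] H)) (hS : S = {a : H →L[ℂ] H | ∀ ξ η, p ξ * a * p η ∈ A}) :
    (∀ a ∈ S, ∀ b ∈ S, a * b ∈ S) ∧
    ∃ C : StarSubalgebra ℂ (H →L[ℂ] H), (C : Set (H →L[ℂ] H)) = S ∧
      IsClosed (C : Set (H →L[ℂ] H)) := by
  classical
  subst hS
  have hmul : ∀ a ∈ {a : H →L[ℂ] H | ∀ ξ η, p ξ * a * p η ∈ A},
      ∀ b ∈ {a : H →L[ℂ] H | ∀ ξ η, p ξ * a * p η ∈ A},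
      a * b ∈ {a : H →L[ℂ] H | ∀ ξ η, p ξ * a * p η ∈ A} := by
    intro a ha b hb ξ η
    obtain ⟨v, hvA, hv1, hv2⟩ := hequiv ξ η
    -- partial isometry facts
    have hv3 : v * p η = v := by
      have h0 : star (v * p η - v) * (v * p η - v) = 0 := by
        have h1 : star (v * p η - v) = p η * star v - star v := by
          rw [star_sub, star_mul, (hproj η).1.star_eq]
        have e1 : star v * (v * p η) = p η := by rw [← mul_assoc, hv2, (hproj η).2]
        rw [h1, sub_mul, mul_sub, mul_sub, mul_assoc (p η) (star v), e1, mul_assoc (p η), hv2,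
          (hproj η).2]
        simp
      have := (CStarRing.star_mul_self_eq_zero_iff _).mp h0
      exact sub_eq_zero.mp this
    have hv4 : star v * p ξ = star v := by
      calc star v * p ξ = star v * (v * star v) := by rw [hv1]
        _ = (star v * v) * star v := by rw [mul_assoc]
        _ = p η * star v := by rw [hv2]
        _ = star v := by rw [← (hproj η).1.star_eq, ← star_mul, hv3]
    set T : Finset Ξ → (H →L[ℂ] H) :=
      fun s => ∑ ζ ∈ s, p ξ * a * p ζ * b * p η * star v with hT
    have hTA : ∀ s, T s ∈ A := by
      intro s
      refine sum_mem fun ζ _ => ?_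
      have e1 : p ξ * a * p ζ * b * p η * star v
          = (p ξ * a * p ζ) * ((p ζ * b * p η) * star v) := by
        conv_lhs => rw [← (hproj ζ).2]
        simp only [mul_assoc]
      rw [e1]
      exact mul_mem (ha ξ ζ) (mul_mem (hb ζ η) (star_mem hvA))
    have hTfix : ∀ s, p ξ * T s * p ξ = T s := by
      intro s
      rw [hT]
      simp only [Finset.mul_sum, Finset.sum_mul]
      refine Finset.sum_congr rfl fun ζ _ => ?_
      simp only [mul_assoc]
      rw [hv4, ← mul_assoc (p ξ) (p ξ), (hproj ξ).2]
    have key : Filter.Tendsto (fun s => (ContinuousLinearMapWOT.ofCLM : (H →L[ℂ] H) → ContinuousLinearMapWOT (RingHom.id ℂ) H H) (T s)) Filter.atTop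
        (nhds ((ContinuousLinearMapWOT.ofCLM : (H →L[ℂ] H) → ContinuousLinearMapWOT (RingHom.id ℂ) H H) (p ξ * (a * b) * p η * star v))) := by
      rw [ContinuousLinearMapWOT.tendsto_iff_forall_dual_apply_tendsto]
      intro x y
      have hsum := aux_hasSum p hproj horth hsup ((b * (p η * star v)) x)
      have hTx : ∀ s, ((ContinuousLinearMapWOT.ofCLM : (H →L[ℂ] H) → ContinuousLinearMapWOT (RingHom.id ℂ) H H) (T s)) x
          = (p ξ * a) (∑ ζ ∈ s, p ζ ((b * (p η * star v)) x)) := by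
        intro s
        rw [ContinuousLinearMapWOT.ofCLM_apply, hT]
        simp only [ContinuousLinearMap.coe_sum', Finset.sum_apply, map_sum]
        exact Finset.sum_congr rfl fun ζ _ => by
          simp only [ContinuousLinearMap.mul_apply]
      have hlim : ((ContinuousLinearMapWOT.ofCLM : (H →L[ℂ] H) → ContinuousLinearMapWOT (RingHom.id ℂ) H H) (p ξ * (a * b) * p η * star v)) x
          = (p ξ * a) ((b * (p η * star v)) x) := by
        rw [ContinuousLinearMapWOT.ofCLM_apply]
        simp only [ContinuousLinearMap.mul_apply]
      simp only [hTx, hlim]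
      exact (y.continuous.comp (p ξ * a).continuous).continuousAt.tendsto.comp hsum
    have hmemlim : (ContinuousLinearMapWOT.ofCLM : (H →L[ℂ] H) → ContinuousLinearMapWOT (RingHom.id ℂ) H H) (p ξ * (a * b) * p η * star v) ∈
        (ContinuousLinearMapWOT.ofCLM : (H →L[ℂ] H) → ContinuousLinearMapWOT (RingHom.id ℂ) H H) '' {x : H →L[ℂ] H | ∃ c ∈ A, x = p ξ * c * p ξ} :=
      (hcorner ξ).mem_of_tendsto key
        (Filter.Eventually.of_forall fun s => ⟨T s, ⟨T s, hTA s, (hTfix s).symm⟩, rfl⟩)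
    obtain ⟨w, ⟨c, hcA, hc⟩, hw⟩ := hmemlim
    have heq : p ξ * (a * b) * p η * star v = p ξ * c * p ξ := by
      have := ContinuousLinearMapWOT.ofCLM_injective hw
      rw [← this, hc]
    have hfin : p ξ * (a * b) * p η = p ξ * (a * b) * p η * star v * v := by
      rw [mul_assoc (p ξ * (a * b) * p η), hv2, mul_assoc (p ξ * (a * b)) (p η) (p η),
        (hproj η).2]
    rw [hfin, heq]
    exact mul_mem (mul_mem (mul_mem (hpA ξ) hcA) (hpA ξ)) hvA
  refine ⟨hmul, ⟨{
      carrier := {a : H →L[ℂ] H | ∀ ξ η, p ξ * a * p η ∈ A}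
      mul_mem' := fun hx hy => hmul _ hx _ hy
      add_mem' := fun {x y} hx hy ξ η => by
        rw [mul_add, add_mul]
        exact add_mem (hx ξ η) (hy ξ η)
      algebraMap_mem' := fun c ξ η => by
        by_cases h : ξ = η
        · subst h
          have : p ξ * algebraMap ℂ (H →L[ℂ] H) c * p ξ = c • p ξ := by
            rw [Algebra.algebraMap_eq_smul_one]
            simp [mul_smul_comm, smul_mul_assoc, (hproj ξ).2]
          rw [this]
          exact SMulMemClass.smul_mem c (hpA ξ)
        · have : p ξ * algebraMap ℂ (H →L[ℂ] H) c * p η = c • (p ξ * p η) := by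
            rw [Algebra.algebraMap_eq_smul_one]
            simp [mul_smul_comm, smul_mul_assoc]
          rw [this, horth ξ η h, smul_zero]
          exact zero_mem A
      star_mem' := fun {x} hx ξ η => by
        have : p ξ * star x * p η = star (p η * x * p ξ) := by
          simp only [star_mul, (hproj ξ).1.star_eq, (hproj η).1.star_eq, mul_assoc]
        rw [this]
        exact star_mem (hx η ξ)
    }, rfl, ?_⟩⟩
  have : {a : H →L[ℂ] H | ∀ ξ η, p ξ * a * p η ∈ A}
      = ⋂ ξ, ⋂ η, (fun a => p ξ * a * p η) ⁻¹' (A : Set (H →L[ℂ] H)) := by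
    ext a; simp [Set.mem_iInter]
  show IsClosed {a : H →L[ℂ] H | ∀ ξ η, p ξ * a * p η ∈ A}
  rw [this]
  refine isClosed_iInter fun ξ => isClosed_iInter fun η => hA.preimage ?_
  fun_prop
end

section
/- Let A be a C*-subalgebra of B(H) containing the identity operator, and (p_ξ)_{ξ∈Ξ} an orthogonal family of projections belonging to A whose supremum is 1 in B(H). Suppose the projections p_ξ are pairwise equivalent in A and for every ξ the corner p_ξ A p_ξ is a von Neumann algebra (closed in the weak operator topology of B(H)). Then the infinite order decomposition S = {a ∈ B(H) : p_ξ a p_η ∈ A for all ξ, η ∈ Ξ} is a von Neumann algebra on H, i.e., a *-subalgebra of B(H) containing the identity that is closed in the weak operator topology. -/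
open scoped InnerProductSpace
open Filter Topology

section Aux

variable {H : Type*} [NormedAddCommGroup H] [InnerProductSpace ℂ H] [CompleteSpace H]
variable {Ξ : Type*}

/-- Strong convergence of the partial sums of the orthogonal family to the identity. -/
lemma stmt10_qtend (p : Ξ → H →L[ℂ] H)
    (hproj : ∀ ξ, IsSelfAdjoint (p ξ) ∧ p ξ * p ξ = p ξ)
    (horth : ∀ ξ η, ξ ≠ η → p ξ * p η = 0)
    (hsup : (⨆ ξ, LinearMap.range (p ξ : H →ₗ[ℂ] H)).topologicalClosure = ⊤) (x : H) :
    Tendsto (fun F : Finset Ξ => (∑ ζ ∈ F, p ζ) x) atTop (𝓝 x) := by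
  classical
  set q : Finset Ξ → H →L[ℂ] H := fun F => ∑ ζ ∈ F, p ζ with hqdef
  have hmul : ∀ F G : Finset Ξ, F ⊆ G → q G * q F = q F := by
    intro F G hFG
    rw [hqdef]
    simp only
    rw [Finset.sum_mul_sum, Finset.sum_comm]
    refine Finset.sum_congr rfl fun ζ hζ => ?_
    rw [Finset.sum_eq_single_of_mem ζ (hFG hζ) (fun η _ hne => horth η ζ hne), (hproj ζ).2]
  have hsa : ∀ F, star (q F) = q F := by
    intro F
    rw [hqdef]
    simp only [star_sum]
    exact Finset.sum_congr rfl fun ζ _ => (hproj ζ).1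
  have happ : ∀ F (z : H), q F (q F z) = q F z := by
    intro F z
    have := congrArg (fun T => T z) (hmul F F subset_rfl)
    simpa [ContinuousLinearMap.mul_apply] using this
  have hnorm : ∀ F (z : H), ‖q F z‖ ≤ ‖z‖ := by
    intro F z
    have hadj : ContinuousLinearMap.adjoint (q F) = q F := by
      rw [← ContinuousLinearMap.star_eq_adjoint, hsa F]
    have h1 : ⟪z, q F z⟫_ℂ = ⟪q F z, q F z⟫_ℂ := by
      have h1' := ContinuousLinearMap.adjoint_inner_right (q F) z (q F z)
      rw [hadj, happ F z] at h1'
      exact h1'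
    have h2 : ‖q F z‖ ^ 2 ≤ ‖z‖ * ‖q F z‖ := by
      have h3 : ‖(⟪q F z, q F z⟫_ℂ)‖ = ‖q F z‖ ^ 2 := by
        rw [inner_self_eq_norm_sq_to_K]
        simp [← Complex.ofReal_pow]
      calc ‖q F z‖ ^ 2 = ‖(⟪z, q F z⟫_ℂ)‖ := by rw [h1, h3]
        _ ≤ ‖z‖ * ‖q F z‖ := norm_inner_le_norm _ _
    rcases (norm_nonneg (q F z)).eq_or_lt with h0 | h0
    · rw [← h0]; exact norm_nonneg z
    · nlinarith [h2, h0]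
  have hex : ∀ y ∈ (⨆ ξ, LinearMap.range (p ξ : H →ₗ[ℂ] H) : Submodule ℂ H),
      ∃ F : Finset Ξ, q F y = y := by
    intro y hy
    refine Submodule.iSup_induction (motive := fun y => ∃ F : Finset Ξ, q F y = y)
      (fun ξ => LinearMap.range (p ξ : H →ₗ[ℂ] H)) hy ?_ ?_ ?_
    · rintro ζ y ⟨z, rfl⟩
      refine ⟨{ζ}, ?_⟩
      have : q {ζ} = p ζ := by rw [hqdef]; simp
      rw [this]
      have := congrArg (fun T => T z) (hproj ζ).2
      simpa [ContinuousLinearMap.mul_apply] using this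
    · exact ⟨∅, map_zero _⟩
    · rintro y₁ y₂ ⟨F₁, h₁⟩ ⟨F₂, h₂⟩
      refine ⟨F₁ ∪ F₂, ?_⟩
      have e₁ : q (F₁ ∪ F₂) y₁ = y₁ := by
        conv_lhs => rw [← h₁]
        have := congrArg (fun T => T y₁) (hmul F₁ (F₁ ∪ F₂) Finset.subset_union_left)
        simpa [ContinuousLinearMap.mul_apply] using this.trans h₁
      have e₂ : q (F₁ ∪ F₂) y₂ = y₂ := by
        conv_lhs => rw [← h₂]
        have := congrArg (fun T => T y₂) (hmul F₂ (F₁ ∪ F₂) Finset.subset_union_right)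
        simpa [ContinuousLinearMap.mul_apply] using this.trans h₂
      rw [map_add, e₁, e₂]
  rw [Metric.tendsto_atTop]
  intro ε hε
  have hxcl : x ∈ closure ((⨆ ξ, LinearMap.range (p ξ : H →ₗ[ℂ] H) : Submodule ℂ H) : Set H) := by
    rw [← Submodule.topologicalClosure_coe, hsup]
    trivial
  rw [Metric.mem_closure_iff] at hxcl
  obtain ⟨y, hy, hxy⟩ := hxcl (ε / 3) (by positivity)
  obtain ⟨F₀, hF₀⟩ := hex y hy
  refine ⟨F₀, fun G hG => ?_⟩
  have hGy : q G y = y := by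
    conv_lhs => rw [← hF₀]
    have := congrArg (fun T => T y) (hmul F₀ G hG)
    simpa [ContinuousLinearMap.mul_apply] using this.trans hF₀
  have hdiff : q G x - x = q G (x - y) + (y - x) := by
    rw [map_sub, hGy]; abel
  have hxy' : ‖x - y‖ < ε / 3 := by rwa [← dist_eq_norm]
  calc dist (q G x) x = ‖q G (x - y) + (y - x)‖ := by rw [dist_eq_norm, hdiff]
    _ ≤ ‖q G (x - y)‖ + ‖y - x‖ := norm_add_le _ _
    _ ≤ ‖x - y‖ + ‖x - y‖ := by
        have := hnorm G (x - y)
        rw [norm_sub_rev y x]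
        linarith
    _ < ε := by linarith

/-- Membership in `A` of a `(ξ,η)`-corner element is equivalent to membership of the
corresponding `(ξ,ξ)`-corner element in the corner set. -/
lemma stmt10_memA_iff {A : StarSubalgebra ℂ (H →L[ℂ] H)} {pξ pη v a : H →L[ℂ] H}
    (hpξA : pξ ∈ A) (hpξ2 : pξ * pξ = pξ) (hpη2 : pη * pη = pη)
    (hvA : v ∈ A) (hv1 : v * star v = pξ) (hv2 : star v * v = pη) :
    pξ * a * pη ∈ A ↔
      (pξ * a * pη) * star v ∈ {x : H →L[ℂ] H | ∃ b ∈ A, x = pξ * b * pξ} := by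
  have hkey : pη * star v = star v * pξ := by rw [← hv2, ← hv1, mul_assoc]
  have hppξ : ∀ X : H →L[ℂ] H, pξ * (pξ * X) = pξ * X := fun X => by
    rw [← mul_assoc, hpξ2]
  have hppη : ∀ X : H →L[ℂ] H, pη * (pη * X) = pη * X := fun X => by
    rw [← mul_assoc, hpη2]
  constructor
  · intro hmem
    refine ⟨(pξ * a * pη) * star v, mul_mem hmem (star_mem hvA), ?_⟩
    simp only [mul_assoc]
    rw [hppξ, ← hkey, hppη]
  · rintro ⟨b, hbA, hb⟩
    have hin : (pξ * a * pη) * star v ∈ A := by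
      rw [hb]; exact mul_mem (mul_mem hpξA hbA) hpξA
    have hc : pξ * a * pη = ((pξ * a * pη) * star v) * v := by
      conv_rhs => rw [mul_assoc, hv2, mul_assoc, hpη2]
    rw [hc]
    exact mul_mem hin hvA

/-- WOT-continuity of two-sided multiplication. -/
lemma stmt10_cont (u w : H →L[ℂ] H) :
    Continuous fun x : H →WOT[ℂ] H =>
      ContinuousLinearMapWOT.ofCLM
        (u * (ContinuousLinearMapWOT.toCLM x) * w) := by
  apply ContinuousLinearMapWOT.continuous_of_dual_apply_continuous
  intro x y
  have hfun : ∀ xx : H →WOT[ℂ] H,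
      y ((ContinuousLinearMapWOT.ofCLM
        (u * (ContinuousLinearMapWOT.toCLM xx) * w)) x)
      = (y.comp u) (xx (w x)) := fun xx => rfl
  simp only [hfun]
  exact ContinuousLinearMapWOT.continuous_dual_apply (w x) (y.comp u)

end Aux

/-- (Theorem 11 of the paper.) Let `A` be a (norm-closed) C*-subalgebra of
`B(H)` containing the identity and `(p ξ)` an orthogonal family of projections in `A` with
supremum `1` in `B(H)`, whose members are pairwise equivalent in `A` and such that each corner
`p ξ * A * p ξ` is a von Neumann algebra (closed in the weak operator topology). Then the
infinite order decomposition `S = {a : p ξ * a * p η ∈ A for all ξ, η}` is a von Neumann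
algebra on `H`: it is the carrier of a unital *-subalgebra of `B(H)` which is closed in the
weak operator topology. -/
theorem stmt_10 {H : Type*} [NormedAddCommGroup H] [InnerProductSpace ℂ H] [CompleteSpace H]
    {Ξ : Type*} (A : StarSubalgebra ℂ (H →L[ℂ] H)) (hA : IsClosed (A : Set (H →L[ℂ] H)))
    (p : Ξ → H →L[ℂ] H) (hpA : ∀ ξ, p ξ ∈ A)
    (hproj : ∀ ξ, IsSelfAdjoint (p ξ) ∧ p ξ * p ξ = p ξ)
    (horth : ∀ ξ η, ξ ≠ η → p ξ * p η = 0)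
    (hsup : (⨆ ξ, LinearMap.range (p ξ : H →ₗ[ℂ] H)).topologicalClosure = ⊤)
    (hequiv : ∀ ξ η, ∃ v ∈ A, v * star v = p ξ ∧ star v * v = p η)
    (hcorner : ∀ ξ, IsClosed ((ContinuousLinearMapWOT.ofCLM : (H →L[ℂ] H) → (H →WOT[ℂ] H)) ''
      {x : H →L[ℂ] H | ∃ a ∈ A, x = p ξ * a * p ξ}))
    (S : Set (H →L[ℂ] H)) (hS : S = {a : H →L[ℂ] H | ∀ ξ η, p ξ * a * p η ∈ A}) :
    (∃ C : StarSubalgebra ℂ (H →L[ℂ] H), (C : Set (H →L[ℂ] H)) = S) ∧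
    IsClosed ((ContinuousLinearMapWOT.ofCLM : (H →L[ℂ] H) → (H →WOT[ℂ] H)) '' S) := by
  classical
  subst hS
  choose v hvA hv1 hv2 using hequiv
  set T := (ContinuousLinearMapWOT.ofCLM : (H →L[ℂ] H) → (H →WOT[ℂ] H)) with hT
  have hkey : ∀ ξ η, p η * star (v ξ η) = star (v ξ η) * p ξ := fun ξ η => by
    rw [← hv2 ξ η, ← hv1 ξ η, mul_assoc]
  have hiff : ∀ ξ η (a : H →L[ℂ] H), p ξ * a * p η ∈ A ↔
      (p ξ * a * p η) * star (v ξ η) ∈ {x : H →L[ℂ] H | ∃ b ∈ A, x = p ξ * b * p ξ} :=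
    fun ξ η a => stmt10_memA_iff (hpA ξ) (hproj ξ).2 (hproj η).2 (hvA ξ η) (hv1 ξ η) (hv2 ξ η)
  -- the multiplicative closure, the key analytic step
  have hmulS : ∀ a b : H →L[ℂ] H, (∀ ξ η, p ξ * a * p η ∈ A) →
      (∀ ξ η, p ξ * b * p η ∈ A) → ∀ ξ η, p ξ * (a * b) * p η ∈ A := by
    intro a b ha hb ξ η
    rw [hiff ξ η]
    have hinj : Function.Injective T := ContinuousLinearMapWOT.ofCLM_injective
    have hmem : T ((p ξ * (a * b) * p η) * star (v ξ η)) ∈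
        T '' {x : H →L[ℂ] H | ∃ c ∈ A, x = p ξ * c * p ξ} := by
      haveI : (atTop : Filter (Finset Ξ)).NeBot := atTop_neBot
      have htd : Tendsto (fun F : Finset Ξ =>
          T (p ξ * (a * (∑ ζ ∈ F, p ζ) * b * star (v ξ η)) * p ξ)) atTop
          (𝓝 (T ((p ξ * (a * b) * p η) * star (v ξ η)))) := by
        rw [ContinuousLinearMapWOT.tendsto_iff_forall_dual_apply_tendsto]
        intro x y
        have hz := stmt10_qtend p hproj horth hsup (b ((star (v ξ η)) ((p ξ) x)))
        have hcont := ((y.comp ((p ξ).comp a)).continuous.tendsto _).comp hz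
        have heq1 : ∀ F : Finset Ξ,
            y ((T (p ξ * (a * (∑ ζ ∈ F, p ζ) * b * star (v ξ η)) * p ξ)) x)
            = (y.comp ((p ξ).comp a)) ((∑ ζ ∈ F, p ζ) (b ((star (v ξ η)) ((p ξ) x)))) :=
          fun F => rfl
        have heq2 : y ((T ((p ξ * (a * b) * p η) * star (v ξ η))) x)
            = (y.comp ((p ξ).comp a)) (b ((star (v ξ η)) ((p ξ) x))) := by
          have : (p ξ * (a * b) * p η) * star (v ξ η)
              = p ξ * (a * b * star (v ξ η)) * p ξ := by
            simp only [mul_assoc]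
            rw [hkey ξ η]
          rw [this]
          rfl
        simp only [heq1, heq2]
        exact hcont
      have hev : ∀ F : Finset Ξ,
          T (p ξ * (a * (∑ ζ ∈ F, p ζ) * b * star (v ξ η)) * p ξ) ∈
            T '' {x : H →L[ℂ] H | ∃ c ∈ A, x = p ξ * c * p ξ} := by
        intro F
        refine Set.mem_image_of_mem _ ?_
        set sF := p ξ * (a * (∑ ζ ∈ F, p ζ) * b * star (v ξ η)) * p ξ with hsF
        have hppξ : ∀ X : H →L[ℂ] H, p ξ * (p ξ * X) = p ξ * X := fun X => by
          rw [← mul_assoc, (hproj ξ).2]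
        have hsum : sF = ∑ ζ ∈ F,
            (p ξ * a * p ζ) * ((p ζ * b * p η) * star (v ξ η)) := by
          rw [hsF]
          simp only [Finset.mul_sum, Finset.sum_mul]
          refine Finset.sum_congr rfl fun ζ _ => ?_
          have hppζ : ∀ X : H →L[ℂ] H, p ζ * (p ζ * X) = p ζ * X := fun X => by
            rw [← mul_assoc, (hproj ζ).2]
          simp only [mul_assoc]
          rw [hppζ, hkey ξ η]
        have hsFA : sF ∈ A := by
          rw [hsum]
          exact sum_mem fun ζ _ =>
            mul_mem (ha ξ ζ) (mul_mem (hb ζ η) (star_mem (hvA ξ η)))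
        refine ⟨sF, hsFA, ?_⟩
        rw [hsF]
        simp only [mul_assoc]
        rw [hppξ, (hproj ξ).2]
      exact (hcorner ξ).mem_of_tendsto htd (Filter.Eventually.of_forall hev)
    obtain ⟨c, hcmem, hceq⟩ := hmem
    have hce := hinj hceq
    rwa [← hce]
  -- assemble the star subalgebra
  constructor
  · refine Exists.intro
      { carrier := {a : H →L[ℂ] H | ∀ ξ η, p ξ * a * p η ∈ A},
        mul_mem' := ?_,
        one_mem' := ?_,
        add_mem' := ?_,
        zero_mem' := ?_,
        algebraMap_mem' := ?_,
        star_mem' := ?_ } rfl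
    · intro a b ha hb
      exact hmulS a b ha hb
    · intro ξ η
      rw [mul_one]
      by_cases hξη : ξ = η
      · subst hξη
        rw [(hproj ξ).2]
        exact hpA ξ
      · rw [horth ξ η hξη]
        exact zero_mem A
    · intro a b ha hb ξ η
      have : p ξ * (a + b) * p η = p ξ * a * p η + p ξ * b * p η := by
        rw [mul_add, add_mul]
      rw [this]
      exact add_mem (ha ξ η) (hb ξ η)
    · intro ξ η
      rw [mul_zero, zero_mul]
      exact zero_mem A
    · intro r ξ η
      rw [Algebra.algebraMap_eq_smul_one, mul_smul_comm, smul_mul_assoc, mul_one]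
      by_cases hξη : ξ = η
      · subst hξη
        rw [(hproj ξ).2]
        exact SMulMemClass.smul_mem r (hpA ξ)
      · rw [horth ξ η hξη]
        rw [smul_zero]
        exact zero_mem A
    · intro a ha ξ η
      have : p ξ * star a * p η = star (p η * a * p ξ) := by
        rw [star_mul, star_mul, (hproj ξ).1, (hproj η).1, mul_assoc]
      rw [this]
      exact star_mem (ha η ξ)
  -- WOT-closedness
  · have himg : T '' {a : H →L[ℂ] H | ∀ ξ η, p ξ * a * p η ∈ A} =
        ⋂ ξ, ⋂ η, (fun x : H →WOT[ℂ] H =>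
          T (p ξ * (ContinuousLinearMapWOT.toCLM x) * (p η * star (v ξ η)))) ⁻¹'
            (T '' {x : H →L[ℂ] H | ∃ b ∈ A, x = p ξ * b * p ξ}) := by
      ext x
      simp only [Set.mem_iInter, Set.mem_preimage]
      constructor
      · rintro ⟨a, haS, rfl⟩ ξ η
        rw [ContinuousLinearMapWOT.toCLM_ofCLM]
        have h1 : (p ξ * a * p η) * star (v ξ η) ∈
            {x : H →L[ℂ] H | ∃ b ∈ A, x = p ξ * b * p ξ} := (hiff ξ η a).1 (haS ξ η)
        have h2 : p ξ * a * (p η * star (v ξ η)) = (p ξ * a * p η) * star (v ξ η) := by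
          simp only [mul_assoc]
        rw [h2]
        exact Set.mem_image_of_mem _ h1
      · intro h
        refine ⟨ContinuousLinearMapWOT.toCLM x, fun ξ η => ?_, ContinuousLinearMapWOT.ofCLM_toCLM x⟩
        obtain ⟨d, hd, hdx⟩ := h ξ η
        have hde : d = p ξ * (ContinuousLinearMapWOT.toCLM x) * (p η * star (v ξ η)) :=
          ContinuousLinearMapWOT.ofCLM_injective hdx
        have h2 : p ξ * (ContinuousLinearMapWOT.toCLM x) * (p η * star (v ξ η))
            = (p ξ * (ContinuousLinearMapWOT.toCLM x) * p η) * star (v ξ η) := by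
          simp only [mul_assoc]
        rw [hde, h2] at hd
        exact (hiff ξ η (ContinuousLinearMapWOT.toCLM x)).2 hd
    rw [himg]
    exact isClosed_iInter fun ξ => isClosed_iInter fun η =>
      (hcorner ξ).preimage (stmt10_cont (p ξ) (p η * star (v ξ η)))
end

section
/- Let Ξ be an infinite index set and λ : Ξ × Ξ → ℂ a family of complex numbers. The following are equivalent: (i) there exists K ∈ ℝ such that for every finite subset F ⊆ Ξ, the operator norm of the finite matrix (λ(i,j))_{i,j∈F} (acting on the finite-dimensional Hilbert space ℂ^F) is at most K; (ii) there exists a bounded linear operator T on the Hilbert space ℓ²(Ξ) with ‖T‖ ≤ K whose matrix entries are λ, i.e., ⟨T e_j, e_i⟩ = λ(i,j) for all i, j ∈ Ξ, where (e_i) is the standard orthonormal basis of ℓ²(Ξ). -/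
open scoped InnerProductSpace ComplexConjugate ENNReal

set_option maxHeartbeats 1000000

private lemma aux_rpow_two (x : ℝ) : x ^ (2 : ℝ≥0∞).toReal = x ^ 2 := by
  rw [ENNReal.toReal_ofNat, show ((2 : ℝ) = ((2 : ℕ) : ℝ)) by norm_num, Real.rpow_natCast]

private lemma aux_restrict {Ξ : Type*} [DecidableEq Ξ] {β : Type*} [AddCommMonoid β]
    {s F : Finset Ξ} (h : s ⊆ F) (g : Ξ → β) :
    (∑ j : F, if (j : Ξ) ∈ s then g j else 0) = ∑ j ∈ s, g j := by
  rw [Finset.sum_coe_sort F (fun j => if j ∈ s then g j else 0), Finset.sum_ite_mem,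
    Finset.inter_eq_right.mpr h]

private lemma aux_fin {Ξ : Type*} [DecidableEq Ξ] (lam : Ξ × Ξ → ℂ) (K : ℝ)
    (hK : ∀ F : Finset Ξ,
      ‖Matrix.toEuclideanCLM (𝕜 := ℂ) (n := F)
        (Matrix.of fun i j : F => lam ((i : Ξ), (j : Ξ)))‖ ≤ K)
    (s I : Finset Ξ) (c : Ξ → ℂ) :
    ∑ i ∈ I, ‖∑ j ∈ s, lam (i, j) * c j‖ ^ 2 ≤ K ^ 2 * ∑ j ∈ s, ‖c j‖ ^ 2 := by
  classical
  set F : Finset Ξ := I ∪ s with hF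
  have hsF : s ⊆ F := Finset.subset_union_right
  have hIF : I ⊆ F := Finset.subset_union_left
  set M := Matrix.toEuclideanCLM (𝕜 := ℂ) (n := F)
      (Matrix.of fun i j : F => lam ((i : Ξ), (j : Ξ))) with hM
  set y : EuclideanSpace ℂ F := WithLp.toLp 2 (fun j => if (j : Ξ) ∈ s then c j else 0) with hy
  have hMy : ∀ i : F, (M y) i = ∑ j ∈ s, lam ((i : Ξ), j) * c j := by
    intro i
    have h0 : (M y) i = ∑ j : F, lam ((i : Ξ), (j : Ξ)) * y j := rfl
    rw [h0, ← aux_restrict hsF fun j => lam ((i : Ξ), j) * c j]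
    refine Finset.sum_congr rfl fun j _ => ?_
    by_cases hj : (j : Ξ) ∈ s <;> simp [hy, hj]
  have hny : ‖y‖ ^ 2 = ∑ j ∈ s, ‖c j‖ ^ 2 := by
    rw [EuclideanSpace.norm_eq, Real.sq_sqrt (by positivity),
      ← aux_restrict hsF fun j => ‖c j‖ ^ 2]
    refine Finset.sum_congr rfl fun j _ => ?_
    by_cases hj : (j : Ξ) ∈ s <;> simp [hy, hj]
  have hnMy : ‖M y‖ ^ 2 = ∑ i : F, ‖(M y) i‖ ^ 2 := by
    rw [EuclideanSpace.norm_eq, Real.sq_sqrt (by positivity)]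
  calc ∑ i ∈ I, ‖∑ j ∈ s, lam (i, j) * c j‖ ^ 2
      ≤ ∑ i ∈ F, ‖∑ j ∈ s, lam (i, j) * c j‖ ^ 2 :=
        Finset.sum_le_sum_of_subset_of_nonneg hIF (fun _ _ _ => by positivity)
    _ = ∑ i : F, ‖(M y) i‖ ^ 2 := by
        simp only [hMy]
        rw [Finset.sum_coe_sort F (fun i => ‖∑ j ∈ s, lam (i, j) * c j‖ ^ 2)]
    _ = ‖M y‖ ^ 2 := hnMy.symm
    _ ≤ (K * ‖y‖) ^ 2 := by
        have h1 : ‖M y‖ ≤ K * ‖y‖ :=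
          (M.le_opNorm y).trans (mul_le_mul_of_nonneg_right (hK F) (norm_nonneg y))
        exact pow_le_pow_left₀ (norm_nonneg _) h1 2
    _ = K ^ 2 * ∑ j ∈ s, ‖c j‖ ^ 2 := by rw [mul_pow, hny]

private lemma aux_row {Ξ : Type*} [DecidableEq Ξ] (lam : Ξ × Ξ → ℂ) (K : ℝ)
    (hK : ∀ F : Finset Ξ,
      ‖Matrix.toEuclideanCLM (𝕜 := ℂ) (n := F)
        (Matrix.of fun i j : F => lam ((i : Ξ), (j : Ξ)))‖ ≤ K)
    (i : Ξ) (s : Finset Ξ) :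
    ∑ j ∈ s, ‖lam (i, j)‖ ^ 2 ≤ K ^ 2 := by
  classical
  set S : ℝ := ∑ j ∈ s, ‖lam (i, j)‖ ^ 2 with hS
  have hS0 : 0 ≤ S := Finset.sum_nonneg fun _ _ => by positivity
  have key := aux_fin lam K hK s {i} (fun j => conj (lam (i, j)))
  have h1 : ∑ j ∈ s, lam (i, j) * conj (lam (i, j)) = (S : ℂ) := by
    rw [hS, Complex.ofReal_sum]
    refine Finset.sum_congr rfl fun j _ => ?_
    rw [Complex.mul_conj']
    norm_cast
  have h2 : ∑ j ∈ s, ‖conj (lam (i, j))‖ ^ 2 = S := by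
    simp [hS]
  rw [Finset.sum_singleton, h1, h2, Complex.norm_real, Real.norm_eq_abs,
    abs_of_nonneg hS0] at key
  rcases hS0.eq_or_lt with h | h
  · rw [← h]; positivity
  · exact le_of_mul_le_mul_right (by rw [← sq]; exact key) h

/-- Let `Ξ` be an infinite index set and `λ : Ξ × Ξ → ℂ`. For `K ∈ ℝ`, the
following are equivalent: (i) every finite submatrix `(λ (i, j))_{i,j ∈ F}` (`F ⊆ Ξ` finite),
viewed as an operator on the finite-dimensional Hilbert space `ℂ^F`, has operator norm at most
`K`; (ii) there is a bounded linear operator `T` on `ℓ²(Ξ)` with `‖T‖ ≤ K` whose matrix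
entries are `λ`, i.e. `⟪e i, T (e j)⟫ = λ (i, j)` for the standard orthonormal basis
`(e i) = (lp.single 2 i 1)` of `ℓ²(Ξ)`. -/
theorem stmt_16 {Ξ : Type*} [Infinite Ξ] [DecidableEq Ξ] (lam : Ξ × Ξ → ℂ) (K : ℝ) :
    (∀ F : Finset Ξ,
      ‖Matrix.toEuclideanCLM (𝕜 := ℂ) (n := F)
        (Matrix.of fun i j : F => lam ((i : Ξ), (j : Ξ)))‖ ≤ K) ↔
    (∃ T : lp (fun _ : Ξ => ℂ) 2 →L[ℂ] lp (fun _ : Ξ => ℂ) 2, ‖T‖ ≤ K ∧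
      ∀ i j : Ξ, ⟪lp.single 2 i (1 : ℂ), T (lp.single 2 j (1 : ℂ))⟫_ℂ = lam (i, j)) := by
  classical
  constructor
  · -- forward direction: construct the operator
    intro hK
    have hK0 : 0 ≤ K := (norm_nonneg _).trans (hK ∅)
    -- the conjugated rows, as elements of ℓ²
    have hrowmem : ∀ i : Ξ, Memℓp (fun j : Ξ => conj (lam (i, j))) 2 := by
      intro i
      refine memℓp_gen' (C := K ^ 2) fun s => ?_
      calc ∑ j ∈ s, ‖conj (lam (i, j))‖ ^ (2 : ℝ≥0∞).toReal
          = ∑ j ∈ s, ‖lam (i, j)‖ ^ 2 := by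
            refine Finset.sum_congr rfl fun j _ => ?_
            rw [aux_rpow_two, RCLike.norm_conj]
        _ ≤ K ^ 2 := aux_row lam K hK i s
    set srow : Ξ → lp (fun _ : Ξ => ℂ) 2 := fun i => ⟨fun j => conj (lam (i, j)), hrowmem i⟩
      with hsrow
    set B : Ξ → (lp (fun _ : Ξ => ℂ) 2 →L[ℂ] ℂ) := fun i => innerSL ℂ (srow i) with hB
    have hB_single : ∀ i j (a : ℂ), B i (lp.single 2 j a) = lam (i, j) * a := by
      intro i j a
      have h0 : B i (lp.single 2 j a) = ⟪srow i, lp.single 2 j a⟫_ℂ := rfl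
      rw [h0, lp.inner_single_right j a (srow i)]
      have hco : (srow i) j = conj (lam (i, j)) := rfl
      rw [RCLike.inner_apply, hco]
      simp
      ring
    have hB_sum : ∀ (i : Ξ) (f : Ξ → ℂ) (s : Finset Ξ),
        B i (∑ j ∈ s, lp.single 2 j (f j)) = ∑ j ∈ s, lam (i, j) * f j := by
      intro i f s
      rw [map_sum]
      exact Finset.sum_congr rfl fun j _ => hB_single i j (f j)
    -- the key uniform estimate, for all of ℓ²
    have claim : ∀ (x : lp (fun _ : Ξ => ℂ) 2) (I : Finset Ξ),
        ∑ i ∈ I, ‖B i x‖ ^ 2 ≤ K ^ 2 * ‖x‖ ^ 2 := by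
      intro x I
      have hsum : HasSum (fun j : Ξ => lp.single 2 j (x j)) x :=
        lp.hasSum_single (by simp) x
      have hy : Filter.Tendsto (fun s : Finset Ξ => ∑ j ∈ s, lp.single 2 j (x j))
          Filter.atTop (nhds x) := hsum
      have hcont1 : Continuous fun z : lp (fun _ : Ξ => ℂ) 2 => ∑ i ∈ I, ‖B i z‖ ^ 2 :=
        continuous_finset_sum _ fun i _ => ((B i).continuous.norm).pow 2
      have hcont2 : Continuous fun z : lp (fun _ : Ξ => ℂ) 2 => K ^ 2 * ‖z‖ ^ 2 :=
        continuous_const.mul (continuous_norm.pow 2)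
      refine le_of_tendsto_of_tendsto' ((hcont1.tendsto x).comp hy)
        ((hcont2.tendsto x).comp hy) fun s => ?_
      show ∑ i ∈ I, ‖B i (∑ j ∈ s, lp.single 2 j (x j))‖ ^ 2
          ≤ K ^ 2 * ‖∑ j ∈ s, lp.single 2 j (x j)‖ ^ 2
      have hns : ‖(∑ j ∈ s, lp.single 2 j (x j) : lp (fun _ : Ξ => ℂ) 2)‖ ^ 2
          = ∑ j ∈ s, ‖x j‖ ^ 2 := by
        have := lp.norm_sum_single (p := 2) (by norm_num) (fun j => x j) s
        simpa [aux_rpow_two] using this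
      rw [hns]
      calc ∑ i ∈ I, ‖B i (∑ j ∈ s, lp.single 2 j (x j))‖ ^ 2
          = ∑ i ∈ I, ‖∑ j ∈ s, lam (i, j) * x j‖ ^ 2 := by
            exact Finset.sum_congr rfl fun i _ => by rw [hB_sum]
        _ ≤ K ^ 2 * ∑ j ∈ s, ‖x j‖ ^ 2 := aux_fin lam K hK s I _
    have memT : ∀ x : lp (fun _ : Ξ => ℂ) 2, Memℓp (fun i => B i x) 2 := by
      intro x
      refine memℓp_gen' (C := K ^ 2 * ‖x‖ ^ 2) fun I => ?_
      calc ∑ i ∈ I, ‖B i x‖ ^ (2 : ℝ≥0∞).toReal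
          = ∑ i ∈ I, ‖B i x‖ ^ 2 := Finset.sum_congr rfl fun i _ => aux_rpow_two _
        _ ≤ K ^ 2 * ‖x‖ ^ 2 := claim x I
    set Tlin : lp (fun _ : Ξ => ℂ) 2 →ₗ[ℂ] lp (fun _ : Ξ => ℂ) 2 :=
      { toFun := fun x => ⟨fun i => B i x, memT x⟩
        map_add' := fun x y => by
          refine lp.ext (funext fun i => ?_)
          simp only [lp.coeFn_add, Pi.add_apply]
          exact map_add (B i) x y
        map_smul' := fun c x => by
          refine lp.ext (funext fun i => ?_)
          simp only [lp.coeFn_smul, Pi.smul_apply, RingHom.id_apply]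
          exact map_smul (B i) c x } with hTlin
    have hTlin_apply : ∀ (x : lp (fun _ : Ξ => ℂ) 2) (i : Ξ), (Tlin x) i = B i x :=
      fun x i => rfl
    have hbound : ∀ x, ‖Tlin x‖ ≤ K * ‖x‖ := by
      intro x
      refine lp.norm_le_of_forall_sum_le (by norm_num) (mul_nonneg hK0 (norm_nonneg x))
        fun s => ?_
      calc ∑ i ∈ s, ‖(Tlin x) i‖ ^ (2 : ℝ≥0∞).toReal
          = ∑ i ∈ s, ‖B i x‖ ^ 2 := Finset.sum_congr rfl fun i _ => aux_rpow_two _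
        _ ≤ K ^ 2 * ‖x‖ ^ 2 := claim x s
        _ = (K * ‖x‖) ^ (2 : ℝ≥0∞).toReal := by rw [aux_rpow_two]; ring
    refine ⟨Tlin.mkContinuous K hbound, LinearMap.mkContinuous_norm_le _ hK0 _, ?_⟩
    intro i j
    have happ : (Tlin.mkContinuous K hbound) (lp.single 2 j (1 : ℂ)) =
        Tlin (lp.single 2 j (1 : ℂ)) := rfl
    rw [happ, lp.inner_single_left, hTlin_apply, hB_single, RCLike.inner_apply]
    simp
  · -- reverse direction
    rintro ⟨T, hT, hmat⟩ F
    have hK0 : 0 ≤ K := (norm_nonneg T).trans hT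
    refine ContinuousLinearMap.opNorm_le_bound _ hK0 fun y => ?_
    set e : Ξ → lp (fun _ : Ξ => ℂ) 2 := fun i => lp.single 2 i (1 : ℂ) with he
    have horth : Orthonormal ℂ e := by
      rw [orthonormal_iff_ite]
      intro i j
      rw [lp.inner_single_left, RCLike.inner_apply]
      by_cases h : i = j
      · subst h; simp [he, lp.single_apply_self]
      · simp [he, lp.single_apply_ne 2 j _ h, if_neg h, Pi.single_apply, h]
    set f : Ξ → ℂ := fun j => if h : j ∈ F then y ⟨j, h⟩ else 0 with hf
    set x : lp (fun _ : Ξ => ℂ) 2 := ∑ j ∈ F, lp.single 2 j (f j) with hx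
    have hxnorm : ‖x‖ ^ 2 = ‖y‖ ^ 2 := by
      have h1 : ‖x‖ ^ 2 = ∑ j ∈ F, ‖f j‖ ^ 2 := by
        have := lp.norm_sum_single (p := 2) (by norm_num) f F
        simpa [aux_rpow_two, hx] using this
      rw [h1, EuclideanSpace.norm_eq, Real.sq_sqrt (by positivity),
        ← Finset.sum_coe_sort F (fun j => ‖f j‖ ^ 2)]
      exact Finset.sum_congr rfl fun j _ => by rw [hf]; simp [j.2]
    have hinner : ∀ i : Ξ, ⟪e i, T x⟫_ℂ = ∑ j ∈ F, f j * lam (i, j) := by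
      intro i
      rw [hx, map_sum, inner_sum]
      refine Finset.sum_congr rfl fun j _ => ?_
      have hsingle : lp.single 2 j (f j) =
          f j • (lp.single 2 j (1 : ℂ) : lp (fun _ : Ξ => ℂ) 2) := by
        rw [← lp.single_smul (E := fun _ : Ξ => ℂ) 2 j (f j) (1 : ℂ), smul_eq_mul, mul_one]
      rw [hsingle, map_smul, inner_smul_right, hmat i j]
    set M := Matrix.toEuclideanCLM (𝕜 := ℂ) (n := F)
        (Matrix.of fun i j : F => lam ((i : Ξ), (j : Ξ))) with hM
    have hMy : ∀ i : F, (M y) i = ⟪e (i : Ξ), T x⟫_ℂ := by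
      intro i
      have h0 : (M y) i = ∑ j : F, lam ((i : Ξ), (j : Ξ)) * y j := rfl
      rw [h0, hinner, ← Finset.sum_coe_sort F (fun j => f j * lam ((i : Ξ), j))]
      refine Finset.sum_congr rfl fun j _ => ?_
      have hfj : f (j : Ξ) = y j := by rw [hf]; simp [j.2]
      rw [hfj, mul_comm]
    have hMynorm : ‖M y‖ ^ 2 ≤ (K * ‖y‖) ^ 2 := by
      have h1 : ‖M y‖ ^ 2 = ∑ i : F, ‖⟪e (i : Ξ), T x⟫_ℂ‖ ^ 2 := by
        rw [EuclideanSpace.norm_eq, Real.sq_sqrt (by positivity)]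
        exact Finset.sum_congr rfl fun i _ => by rw [hMy]
      have hbessel : ∑ i : F, ‖⟪e (i : Ξ), T x⟫_ℂ‖ ^ 2 ≤ ‖T x‖ ^ 2 := by
        have := (horth.comp (Subtype.val : F → Ξ) Subtype.val_injective).sum_inner_products_le
          (s := Finset.univ) (T x)
        simpa using this
      have hTx : ‖T x‖ ^ 2 ≤ (K * ‖y‖) ^ 2 := by
        have h2 : ‖T x‖ ≤ K * ‖y‖ := by
          have := (T.le_opNorm x).trans (mul_le_mul_of_nonneg_right hT (norm_nonneg x))
          have hxy : ‖x‖ = ‖y‖ := by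
            have := hxnorm
            nlinarith [norm_nonneg x, norm_nonneg y]
          rwa [hxy] at this
        exact pow_le_pow_left₀ (norm_nonneg _) h2 2
      linarith [h1 ▸ hbessel]
    nlinarith [norm_nonneg (M y), mul_nonneg hK0 (norm_nonneg y)]
end
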